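/- Lemma 3.1(2): Let u : Ω → ℝ be Lipschitz and let φ be a test function. Then the set of singular values ε, i.e. the set of ε ∈ ℝ for which the Lebesgue measure of S(u_ε) ∩ {x ∈ Ω : ∇φ(x) ≠ 0} is strictly positive, is at most countable. -/

import Mathlib

open MeasureTheory
open scoped RealInnerProductSpace ENNReal

/-- The vector field `∇u + ε ∇φ + F⃗` (the a.e. gradient of `u_ε = u + ε φ`
shifted by `F⃗`). -/
noncomputable def gradShift {m : ℕ} (u φ : EuclideanSpace ℝ (Fin m) → ℝ)
    (F : EuclideanSpace ℝ (Fin m) → EuclideanSpace ℝ (Fin m)) (ε : ℝ)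
    (x : EuclideanSpace ℝ (Fin m)) : EuclideanSpace ℝ (Fin m) :=
  gradient u x + ε • gradient φ x + F x

/-- The generalized p-area functional `𝔉(u_ε)` of `u_ε = u + ε φ`. -/
noncomputable def pArea {m : ℕ} (Ω : Set (EuclideanSpace ℝ (Fin m)))
    (u φ : EuclideanSpace ℝ (Fin m) → ℝ)
    (F : EuclideanSpace ℝ (Fin m) → EuclideanSpace ℝ (Fin m))
    (H : EuclideanSpace ℝ (Fin m) → ℝ) (ε : ℝ) : ℝ :=
  ∫ x in Ω, (‖gradShift u φ F ε x‖ + H x * (u x + ε * φ x))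

/-- The singular set `S(u_ε) = {x ∈ Ω : ∇u_ε + F⃗ = 0}` of `u_ε = u + ε φ`. -/
def singSet {m : ℕ} (Ω : Set (EuclideanSpace ℝ (Fin m)))
    (u φ : EuclideanSpace ℝ (Fin m) → ℝ)
    (F : EuclideanSpace ℝ (Fin m) → EuclideanSpace ℝ (Fin m)) (ε : ℝ) :
    Set (EuclideanSpace ℝ (Fin m)) :=
  {x ∈ Ω | gradShift u φ F ε x = 0}

lemma measurable_gradient' {m : ℕ} (f : EuclideanSpace ℝ (Fin m) → ℝ) :
    Measurable (gradient f) := by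
  have : Measurable (fderiv ℝ f) := measurable_fderiv ℝ f
  exact ((InnerProductSpace.toDual ℝ
    (EuclideanSpace ℝ (Fin m))).symm.continuous.measurable).comp this

/-- **Lemma 3.1(2)**: there are at most countably many singular `ε`'s, i.e. the set of
`ε ∈ ℝ` for which `S(u_ε) ∩ {∇φ ≠ 0}` has positive Lebesgue measure is countable. -/
theorem countable_singular_epsilons {m : ℕ} (hm : 1 ≤ m)
    (Ω : Set (EuclideanSpace ℝ (Fin m)))
    (hΩopen : IsOpen Ω) (hΩbdd : Bornology.IsBounded Ω)
    (hΩne : Ω.Nonempty) (hΩconn : IsConnected Ω)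
    (F : EuclideanSpace ℝ (Fin m) → EuclideanSpace ℝ (Fin m))
    (hF : IntegrableOn F Ω volume)
    (H : EuclideanSpace ℝ (Fin m) → ℝ)
    (hH : MemLp H ⊤ (volume.restrict Ω))
    (u : EuclideanSpace ℝ (Fin m) → ℝ) (hu : ∃ K, LipschitzOnWith K u Ω)
    (φ : EuclideanSpace ℝ (Fin m) → ℝ) (hφ : ∃ K, LipschitzWith K φ)
    (hφsupp : HasCompactSupport φ) (hφΩ : tsupport φ ⊆ Ω) :
    Set.Countable {ε : ℝ |
      0 < volume (singSet Ω u φ F ε ∩ {x | gradient φ x ≠ 0})} := by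
  classical
  obtain ⟨g, hg_sm, hFg⟩ := hF.aestronglyMeasurable
  -- the null set where F and g differ, inside Ω
  set N : Set (EuclideanSpace ℝ (Fin m)) := {x | F x ≠ g x} ∩ Ω with hN_def
  have hN : volume N = 0 := by
    have h0 : volume.restrict Ω {x | F x ≠ g x} = 0 :=
      ae_iff.mp hFg
    rwa [Measure.restrict_apply' hΩopen.measurableSet] at h0
  -- measurable versions of the singular sets
  set B : ℝ → Set (EuclideanSpace ℝ (Fin m)) := fun ε =>
    (Ω ∩ {x | gradient u x + ε • gradient φ x + g x = 0}) ∩ {x | gradient φ x ≠ 0}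
    with hB_def
  have hB_mble : ∀ ε, MeasurableSet (B ε) := by
    intro ε
    have h1 : Measurable fun x => gradient u x + ε • gradient φ x + g x :=
      ((measurable_gradient' u).add ((measurable_gradient' φ).const_smul ε)).add
        hg_sm.measurable
    have h2 : MeasurableSet {x | gradient u x + ε • gradient φ x + g x = 0} :=
      h1 (measurableSet_singleton 0)
    have h3 : MeasurableSet {x : EuclideanSpace ℝ (Fin m) | gradient φ x ≠ 0} :=
      ((measurable_gradient' φ) (measurableSet_singleton 0)).compl
    rw [hB_def]
    exact ((hΩopen.measurableSet.inter h2).inter h3)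
  have hB_disj : Pairwise (Function.onFun Disjoint B) := by
    intro ε ε' hne
    rw [Function.onFun, Set.disjoint_left]
    rintro x ⟨⟨-, hx1⟩, hx2⟩ ⟨⟨-, hx1'⟩, -⟩
    have : ε • gradient φ x = ε' • gradient φ x := by
      have := hx1.trans hx1'.symm
      simpa using (by linear_combination (norm := module) this :
        ε • gradient φ x = ε' • gradient φ x)
    have : (ε - ε') • gradient φ x = 0 := by
      rw [sub_smul, this, sub_self]
    rcases smul_eq_zero.mp this with h | h
    · exact hne (sub_eq_zero.mp h)
    · exact hx2 h
  have key : Set.Countable {ε : ℝ | 0 < volume (B ε)} :=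
    MeasureTheory.Measure.countable_meas_pos_of_disjoint_iUnion hB_mble hB_disj
  refine key.mono ?_
  intro ε hε
  simp only [Set.mem_setOf_eq] at hε ⊢
  by_contra hB0
  push_neg at hB0
  have hB0 : volume (B ε) = 0 := le_antisymm hB0 zero_le
  have hsub : singSet Ω u φ F ε ∩ {x | gradient φ x ≠ 0} ⊆ B ε ∪ N := by
    rintro x ⟨⟨hxΩ, hxS⟩, hxφ⟩
    by_cases hfg : F x = g x
    · left
      refine ⟨⟨hxΩ, ?_⟩, hxφ⟩
      simpa [gradShift, hfg] using hxS
    · exact Or.inr ⟨hfg, hxΩ⟩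
  have hle := measure_mono (μ := volume) hsub
  have h0 : volume (B ε ∪ N) = 0 := measure_union_null hB0 hN
  exact hε.ne' (le_antisymm (hle.trans h0.le) zero_le)
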